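/- Let k ≥ 1 be an integer, let b₁,...,b_k be real numbers, and let j₁ < j₂ < ... < j_k be distinct integers. Set P(ω) = Σ_{s=1}^{k} b_s e^{√(−1) j_s ω}. Then ∫_{π/(2k)}^{π} |P(ω)|² dω ≥ (π/2) Σ_{s=1}^{k} b_s². -/

import Mathlib

open MeasureTheory intervalIntegral Complex Finset

lemma int_exp_int (n : ℤ) :
    (∫ ω : ℝ in (-Real.pi)..Real.pi, Complex.exp (Complex.I * (n : ℂ) * ω)) =
      if n = 0 then ((2 * Real.pi : ℝ) : ℂ) else 0 := by
  rcases eq_or_ne n 0 with h | h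
  · rw [if_pos h]
    simp [h, sub_neg_eq_add]
    ring
  · rw [if_neg h]
    have hc : (Complex.I * (n : ℂ)) ≠ 0 := by
      apply mul_ne_zero Complex.I_ne_zero
      exact_mod_cast h
    have := integral_exp_mul_complex (a := -Real.pi) (b := Real.pi) hc
    simp only [mul_assoc] at this ⊢
    rw [this]
    have heq : Complex.exp (Complex.I * ((n : ℂ) * (Real.pi : ℂ))) =
        Complex.exp (Complex.I * ((n : ℂ) * ((-Real.pi : ℝ) : ℂ))) := by
      rw [Complex.exp_eq_exp_iff_exists_int]
      refine ⟨n, ?_⟩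
      push_cast
      ring
    rw [heq, sub_self, zero_div]

noncomputable def trigP (k : ℕ) (b : Fin k → ℝ) (j : Fin k → ℤ) (ω : ℝ) : ℂ :=
  ∑ s, (b s : ℂ) * Complex.exp (Complex.I * (j s : ℂ) * ω)

lemma trigP_cont (k : ℕ) (b : Fin k → ℝ) (j : Fin k → ℤ) : Continuous (trigP k b j) := by
  apply continuous_finset_sum
  intro s _
  exact continuous_const.mul
    (Complex.continuous_exp.comp (continuous_const.mul Complex.continuous_ofReal))

lemma trigP_prod (k : ℕ) (b : Fin k → ℝ) (j : Fin k → ℤ) (ω : ℝ) :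
    (((‖trigP k b j ω‖) ^ 2 : ℝ) : ℂ) =
      ∑ s, ∑ t, ((b s * b t : ℝ) : ℂ) * Complex.exp (Complex.I * ((j s - j t : ℤ) : ℂ) * ω) := by
  have h1 : (((‖trigP k b j ω‖) ^ 2 : ℝ) : ℂ)
      = trigP k b j ω * (starRingEnd ℂ) (trigP k b j ω) := by
    rw [Complex.mul_conj]
    norm_cast
    simp [Complex.sq_norm]
  rw [h1, trigP]
  simp only [map_sum, map_mul]
  rw [Finset.sum_mul_sum]
  refine Finset.sum_congr rfl fun s _ => Finset.sum_congr rfl fun t _ => ?_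
  have h2 : (starRingEnd ℂ) (Complex.exp (Complex.I * (j t : ℂ) * ω)) =
      Complex.exp (-(Complex.I * (j t : ℂ) * ω)) := by
    rw [← Complex.exp_conj]
    congr 1
    simp
  rw [Complex.conj_ofReal, h2, mul_mul_mul_comm, ← Complex.exp_add]
  push_cast
  ring_nf

lemma trigP_orth (k : ℕ) (b : Fin k → ℝ) (j : Fin k → ℤ) (hj : Function.Injective j) :
    (∫ ω in (-Real.pi)..Real.pi, (‖trigP k b j ω‖) ^ 2)
      = 2 * Real.pi * ∑ s, (b s) ^ 2 := by
  have hterm : ∀ s t : Fin k, IntervalIntegrable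
      (fun ω : ℝ => ((b s * b t : ℝ) : ℂ) *
        Complex.exp (Complex.I * ((j s - j t : ℤ) : ℂ) * ω)) volume (-Real.pi) Real.pi := by
    intro s t
    exact (continuous_const.mul (Complex.continuous_exp.comp
      (continuous_const.mul Complex.continuous_ofReal))).intervalIntegrable _ _
  have h1 : ((∫ ω in (-Real.pi)..Real.pi, (‖trigP k b j ω‖) ^ 2 : ℝ) : ℂ) =
      ∑ s : Fin k, ∑ t : Fin k, ((b s * b t : ℝ) : ℂ) *
        (if (j s - j t : ℤ) = 0 then ((2 * Real.pi : ℝ) : ℂ) else 0) := by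
    rw [← intervalIntegral.integral_ofReal]
    rw [intervalIntegral.integral_congr (g := fun ω : ℝ => ∑ s : Fin k, ∑ t : Fin k,
      ((b s * b t : ℝ) : ℂ) * Complex.exp (Complex.I * ((j s - j t : ℤ) : ℂ) * ω))
      (fun ω _ => trigP_prod k b j ω)]
    have hterm2 : ∀ s : Fin k, IntervalIntegrable
        (fun ω : ℝ => ∑ t : Fin k, ((b s * b t : ℝ) : ℂ) *
          Complex.exp (Complex.I * ((j s - j t : ℤ) : ℂ) * ω))
        volume (-Real.pi) Real.pi := fun s =>
      (continuous_finset_sum _ fun t _ => continuous_const.mul (Complex.continuous_exp.comp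
        (continuous_const.mul Complex.continuous_ofReal))).intervalIntegrable _ _
    rw [intervalIntegral.integral_finset_sum (fun s _ => hterm2 s)]
    refine Finset.sum_congr rfl fun s _ => ?_
    rw [intervalIntegral.integral_finset_sum (fun t _ => hterm s t)]
    refine Finset.sum_congr rfl fun t _ => ?_
    rw [intervalIntegral.integral_const_mul, int_exp_int]
  have h2 : (∑ s : Fin k, ∑ t : Fin k, ((b s * b t : ℝ) : ℂ) *
      (if (j s - j t : ℤ) = 0 then ((2 * Real.pi : ℝ) : ℂ) else 0)) =
      ((2 * Real.pi * ∑ s, (b s) ^ 2 : ℝ) : ℂ) := by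
    have hiff : ∀ s t : Fin k, ((j s - j t : ℤ) = 0) ↔ (t = s) := by
      intro s t
      rw [sub_eq_zero, hj.eq_iff]
      exact eq_comm
    simp_rw [hiff]
    push_cast
    rw [Finset.mul_sum]
    refine Finset.sum_congr rfl fun s _ => ?_
    simp only [mul_ite, mul_zero, Finset.sum_ite_eq', Finset.mem_univ, if_true]
    ring
  exact_mod_cast h1.trans h2

lemma trigP_even (k : ℕ) (b : Fin k → ℝ) (j : Fin k → ℤ) (ω : ℝ) :
    ‖trigP k b j (-ω)‖ = ‖trigP k b j ω‖ := by
  have h : trigP k b j (-ω) = (starRingEnd ℂ) (trigP k b j ω) := by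
    rw [trigP, trigP, map_sum]
    refine Finset.sum_congr rfl fun s _ => ?_
    rw [map_mul, Complex.conj_ofReal, ← Complex.exp_conj]
    congr 1
    simp
  rw [h, Complex.norm_conj]

lemma trigP_bound (k : ℕ) (b : Fin k → ℝ) (j : Fin k → ℤ) (ω : ℝ) :
    (‖trigP k b j ω‖) ^ 2 ≤ (k : ℝ) * ∑ s, (b s) ^ 2 := by
  have h1 : ‖trigP k b j ω‖ ≤ ∑ s, |b s| := by
    rw [trigP]
    refine le_trans (norm_sum_le _ _) (Finset.sum_le_sum fun s _ => ?_)
    rw [norm_mul]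
    have : ‖Complex.exp (Complex.I * (j s : ℂ) * ω)‖ = 1 := by
      rw [Complex.norm_exp]
      simp
    rw [this, mul_one, Complex.norm_real, Real.norm_eq_abs]
  have h2 : (∑ s, |b s|) ^ 2 ≤ (k : ℝ) * ∑ s, (b s) ^ 2 := by
    have := sq_sum_le_card_mul_sum_sq (s := Finset.univ) (f := fun s : Fin k => |b s|)
    simpa [sq_abs] using this
  exact le_trans (pow_le_pow_left₀ (norm_nonneg _) h1 2) h2

/-- Let `k ≥ 1`, `b₁,...,b_k ∈ ℝ`, and `j₁ < ... < j_k` distinct integers.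
With `P(ω) = Σ_s b_s e^{i j_s ω}`, one has
`∫_{π/(2k)}^{π} |P(ω)|² dω ≥ (π/2) Σ_s b_s²`. -/
theorem stmt_11 (k : ℕ) (hk : 1 ≤ k) (b : Fin k → ℝ) (j : Fin k → ℤ) (hj : StrictMono j) :
    (Real.pi / 2) * ∑ s, (b s) ^ 2 ≤
      ∫ ω in (Real.pi / (2 * (k : ℝ)))..Real.pi,
        (‖∑ s, (b s : ℂ) *
          Complex.exp (Complex.I * ((j s : ℤ) : ℂ) * (ω : ℂ))‖) ^ 2 := by
  have hgoal : (∫ ω in (Real.pi / (2 * (k : ℝ)))..Real.pi,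
      (‖∑ s, (b s : ℂ) *
        Complex.exp (Complex.I * ((j s : ℤ) : ℂ) * (ω : ℂ))‖) ^ 2)
      = ∫ ω in (Real.pi / (2 * (k : ℝ)))..Real.pi, (‖trigP k b j ω‖) ^ 2 := rfl
  rw [hgoal]
  set g : ℝ → ℝ := fun ω => (‖trigP k b j ω‖) ^ 2 with hgdef
  have hgcont : Continuous g := (continuous_norm.comp (trigP_cont k b j)).pow 2
  have hInt : ∀ u v : ℝ, IntervalIntegrable g volume u v := fun u v =>
    hgcont.intervalIntegrable u v
  have hπ : (0 : ℝ) < Real.pi := Real.pi_pos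
  have hk0 : (0 : ℝ) < (k : ℝ) := by exact_mod_cast hk
  have hhalf : (∫ ω in (0:ℝ)..Real.pi, g ω) = Real.pi * ∑ s, (b s) ^ 2 := by
    have hneg : (∫ ω in (-Real.pi)..(0:ℝ), g ω) = ∫ ω in (0:ℝ)..Real.pi, g ω := by
      have h := intervalIntegral.integral_comp_neg (a := (0:ℝ)) (b := Real.pi) g
      simp only [neg_zero] at h
      rw [← h]
      exact intervalIntegral.integral_congr fun ω _ => by
        simp only [hgdef, trigP_even]
    have hadd : (∫ ω in (-Real.pi)..(0:ℝ), g ω) + (∫ ω in (0:ℝ)..Real.pi, g ω)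
        = ∫ ω in (-Real.pi)..Real.pi, g ω :=
      intervalIntegral.integral_add_adjacent_intervals (hInt _ _) (hInt _ _)
    rw [hneg] at hadd
    have horth := trigP_orth k b j hj.injective
    rw [hgdef]
    linarith [horth ▸ hadd]
  have ha0 : (0:ℝ) ≤ Real.pi / (2 * k) := by positivity
  have hsmall : (∫ ω in (0:ℝ)..(Real.pi / (2 * k)), g ω) ≤ (Real.pi / 2) * ∑ s, (b s) ^ 2 := by
    have h1 : (∫ ω in (0:ℝ)..(Real.pi / (2 * k)), g ω)
        ≤ ∫ _ω in (0:ℝ)..(Real.pi / (2 * k)), (k : ℝ) * ∑ s, (b s) ^ 2 := by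
      apply intervalIntegral.integral_mono_on ha0 (hInt _ _) intervalIntegrable_const
      exact fun x _ => trigP_bound k b j x
    rw [intervalIntegral.integral_const, smul_eq_mul, sub_zero] at h1
    calc (∫ ω in (0:ℝ)..(Real.pi / (2 * k)), g ω)
        ≤ Real.pi / (2 * k) * ((k : ℝ) * ∑ s, (b s) ^ 2) := h1
      _ = (Real.pi / 2) * ∑ s, (b s) ^ 2 := by
          field_simp
  have hsplit : (∫ ω in (0:ℝ)..(Real.pi / (2 * k)), g ω)
      + (∫ ω in (Real.pi / (2 * k))..Real.pi, g ω) = ∫ ω in (0:ℝ)..Real.pi, g ω :=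
    intervalIntegral.integral_add_adjacent_intervals (hInt _ _) (hInt _ _)
  linarith
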